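/- The vector field D(x,y) = −6y(−9x⁴+9y⁴+1) ∂_x − 6x(9x⁴+18x²y²+9y⁴+2) ∂_y has an isolated zero at the origin with index −1. -/

import Mathlib

open Real

/-- The umbilic identifier vector field of `f(x,y) = x³ - 3xy²`. -/
noncomputable def Dfield (p : ℝ × ℝ) : ℝ × ℝ :=
  (-6 * p.2 * (-9 * p.1 ^ 4 + 9 * p.2 ^ 4 + 1),
   -6 * p.1 * (9 * p.1 ^ 4 + 18 * p.1 ^ 2 * p.2 ^ 2 + 9 * p.2 ^ 4 + 2))

noncomputable def Dnorm (p : ℝ × ℝ) : ℝ :=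
  Real.sqrt ((Dfield p).1 ^ 2 + (Dfield p).2 ^ 2)

lemma key (a b : ℝ) (ha : 0 < a) :
    Real.sqrt (a ^ 2 + b ^ 2) * Real.cos (Real.arctan (b / a)) = a ∧
    Real.sqrt (a ^ 2 + b ^ 2) * Real.sin (Real.arctan (b / a)) = b := by
  have hs : Real.sqrt (1 + (b / a) ^ 2) = Real.sqrt (a ^ 2 + b ^ 2) / a := by
    rw [eq_div_iff ha.ne', ← Real.sqrt_sq ha.le, ← Real.sqrt_mul (by positivity)]
    congr 1
    field_simp
    rw [Real.sq_sqrt (by positivity)]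
  have hpos : (0:ℝ) < Real.sqrt (a ^ 2 + b ^ 2) := by positivity
  constructor
  · rw [Real.cos_arctan, hs]
    field_simp
  · rw [Real.sin_arctan, hs]
    field_simp

/-- The vector field `D = -6y(-9x⁴+9y⁴+1)∂_x - 6x(9x⁴+18x²y²+9y⁴+2)∂_y` has an isolated
zero at the origin, and its index there is `-1`: on every small circle traversed
counterclockwise, a continuous angle lift of the normalized field decreases by `2π`. -/
theorem Dfield_index_neg_one :
    Dfield 0 = 0 ∧
    (∃ ε : ℝ, 0 < ε ∧
      (∀ p : ℝ × ℝ, p ≠ 0 → Real.sqrt (p.1 ^ 2 + p.2 ^ 2) < ε → Dfield p ≠ 0) ∧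
      ∀ r : ℝ, 0 < r → r < ε →
        ∃ α : ℝ → ℝ, Continuous α ∧
          (∀ t : ℝ, Dfield (r * Real.cos t, r * Real.sin t)
            = (Dnorm (r * Real.cos t, r * Real.sin t) * Real.cos (α t),
               Dnorm (r * Real.cos t, r * Real.sin t) * Real.sin (α t))) ∧
          α (2 * π) - α 0 = -(2 * π)) := by
  refine ⟨by simp [Dfield], 1/2, by norm_num, ?_, ?_⟩
  · -- isolated zero (in fact the origin is the only zero)
    intro p hp _
    intro h
    rw [Prod.ext_iff] at h
    obtain ⟨h1, h2⟩ := h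
    simp only [Dfield] at h1 h2
    have hB : (0:ℝ) < 9 * p.1 ^ 4 + 18 * p.1 ^ 2 * p.2 ^ 2 + 9 * p.2 ^ 4 + 2 := by positivity
    have hx : p.1 = 0 := by
      rcases mul_eq_zero.1 h2 with h | h
      · rcases mul_eq_zero.1 h with h | h
        · norm_num at h
        · exact h
      · exact absurd h hB.ne'
    rw [hx] at h1
    have hA : (0:ℝ) < -9 * (0:ℝ) ^ 4 + 9 * p.2 ^ 4 + 1 := by positivity
    have hy : p.2 = 0 := by
      rcases mul_eq_zero.1 h1 with h | h
      · rcases mul_eq_zero.1 h with h | h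
        · norm_num at h
        · exact h
      · exact absurd h hA.ne'
    exact hp (Prod.ext hx hy)
  · intro r hr hr2
    set P : ℝ → ℝ × ℝ := fun t => (r * Real.cos t, r * Real.sin t) with hP
    set a : ℝ → ℝ := fun t => -(Dfield (P t)).1 * Real.sin t - (Dfield (P t)).2 * Real.cos t
      with ha_def
    set b : ℝ → ℝ := fun t => (Dfield (P t)).1 * Real.cos t - (Dfield (P t)).2 * Real.sin t
      with hb_def
    have hapos : ∀ t, 0 < a t := by
      intro t
      have h1 := Real.sin_sq_add_cos_sq t
      have key2 : a t = 6 * r * ((Real.sin t) ^ 2 + 2 * (Real.cos t) ^ 2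
          + 9 * r ^ 4 * ((Real.sin t) ^ 4 + (Real.cos t) ^ 4)) := by
        simp only [ha_def, hP, Dfield]
        linear_combination (54 * r ^ 5 * ((Real.sin t) ^ 4 + (Real.cos t) ^ 4)) * h1
      rw [key2]
      have h4 : (0:ℝ) ≤ Real.cos t ^ 2 + 9 * r ^ 4 * ((Real.sin t) ^ 4 + (Real.cos t) ^ 4) := by
        positivity
      exact mul_pos (by linarith) (by nlinarith)
    refine ⟨fun t => -(π/2) - t + Real.arctan (b t / a t), ?_, ?_, ?_⟩
    · have hcD : Continuous fun t => Dfield (P t) := by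
        simp only [Dfield, hP]
        fun_prop
      have hca : Continuous a := by fun_prop
      have hcb : Continuous b := by fun_prop
      exact (continuous_const.sub continuous_id).add
        (Real.continuous_arctan.comp (hcb.div hca fun t => (hapos t).ne'))
    · intro t
      have hk := key (a t) (b t) (hapos t)
      have hnorm : Dnorm (P t) = Real.sqrt (a t ^ 2 + b t ^ 2) := by
        simp only [Dnorm]
        congr 1
        simp only [ha_def, hb_def]
        linear_combination (-(Dfield (P t)).1 ^ 2 - (Dfield (P t)).2 ^ 2) *
          (Real.sin_sq_add_cos_sq t)
      have hc : Real.cos (-(π/2) - t + Real.arctan (b t / a t))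
          = Real.cos (Real.arctan (b t / a t)) * (-Real.sin t)
            + Real.sin (Real.arctan (b t / a t)) * Real.cos t := by
        have : -(π/2) - t + Real.arctan (b t / a t) = Real.arctan (b t / a t) - (π/2 + t) := by
          ring
        rw [this, Real.cos_sub, Real.cos_add, Real.sin_add]
        simp [Real.cos_pi_div_two, Real.sin_pi_div_two]
      have hsn : Real.sin (-(π/2) - t + Real.arctan (b t / a t))
          = Real.sin (Real.arctan (b t / a t)) * (-Real.sin t)
            - Real.cos (Real.arctan (b t / a t)) * Real.cos t := by
        have : -(π/2) - t + Real.arctan (b t / a t) = Real.arctan (b t / a t) - (π/2 + t) := by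
          ring
        rw [this, Real.sin_sub, Real.cos_add, Real.sin_add]
        simp [Real.cos_pi_div_two, Real.sin_pi_div_two]
      show Dfield (P t) = _
      rw [Prod.ext_iff]
      constructor
      · show (Dfield (P t)).1 = Dnorm (P t) * Real.cos _
        rw [hc, hnorm, mul_add, ← mul_assoc, ← mul_assoc, hk.1, hk.2]
        simp only [ha_def, hb_def]
        linear_combination (-(Dfield (P t)).1) * (Real.sin_sq_add_cos_sq t)
      · show (Dfield (P t)).2 = Dnorm (P t) * Real.sin _
        rw [hsn, hnorm, mul_sub, ← mul_assoc, ← mul_assoc, hk.1, hk.2]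
        simp only [ha_def, hb_def]
        linear_combination (-(Dfield (P t)).2) * (Real.sin_sq_add_cos_sq t)
    · have hP2 : P (2 * π) = P 0 := by
        simp [hP, Real.cos_two_pi, Real.sin_two_pi]
      have hae : a (2 * π) = a 0 := by
        simp [ha_def, hP2, Real.cos_two_pi, Real.sin_two_pi]
      have hbe : b (2 * π) = b 0 := by
        simp [hb_def, hP2, Real.cos_two_pi, Real.sin_two_pi]
      show -(π/2) - 2 * π + Real.arctan (b (2 * π) / a (2 * π))
          - (-(π/2) - 0 + Real.arctan (b 0 / a 0)) = -(2 * π)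
      rw [hae, hbe]
      ring
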